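/- The non-parametric Hamilton–Jacobi constraints vanish identically on integral elements: let L : Mat_{M×(n+1)}(ℝ) → ℝ be differentiable, let P ∈ Mat_{M×(n+1)}(ℝ) and let X be a real (n+1)×n matrix. Define π_i = Σ_{j=0}^n (∂L/∂P_{ij})(P) · w_j(X) for i = 1,…,M, and H_j = Σ_{j'≠j} ( Σ_{i=1}^M (∂L/∂P_{ij'})(P) · P_{ij} ) · w_{j'}(X) + ( Σ_{i=1}^M (∂L/∂P_{ij})(P) · P_{ij} − L(P) ) · w_j(X) for j = 0,…,n. Then for every k ∈ {1,…,n}, Σ_{i=1}^M π_i · (P·X)_{ik} = Σ_{j=0}^n H_j · X_{jk}. -/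

import Mathlib

attribute [local instance] Matrix.normedAddCommGroup Matrix.normedSpace

/-- The signed maximal minor vector of a real `(n+1) × n` matrix `X`:
`w_j(X) = (−1)^j det X⁽ʲ⁾`, where `X⁽ʲ⁾` is obtained from `X` by deleting
its `j`-th row. -/
noncomputable def signedMinor {n : ℕ} (X : Matrix (Fin (n + 1)) (Fin n) ℝ)
    (j : Fin (n + 1)) : ℝ :=
  (-1 : ℝ) ^ (j : ℕ) * (X.submatrix j.succAbove id).det

lemma signedMinor_sum {n : ℕ} (X : Matrix (Fin (n + 1)) (Fin n) ℝ) (k : Fin n) :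
    ∑ j : Fin (n + 1), signedMinor X j * X j k = 0 := by
  set Y : Matrix (Fin (n + 1)) (Fin (n + 1)) ℝ :=
    Matrix.of (fun j i => Fin.cases (X j k) (fun i' => X j i') i) with hY
  have hdet : Y.det = 0 :=
    Matrix.det_zero_of_column_eq (i := 0) (j := k.succ) (Fin.succ_ne_zero k).symm
      (fun r => by simp [hY])
  have h := Matrix.det_succ_column_zero Y
  rw [hdet] at h
  refine (Finset.sum_congr rfl ?_).trans h.symm
  intro j _
  have hsub : Y.submatrix j.succAbove Fin.succ = X.submatrix j.succAbove id := by
    ext a b; simp [hY]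
  rw [hsub]
  simp [hY, hsub, signedMinor]
  ring

/-- The non-parametric Hamilton–Jacobi constraints vanish identically
on integral elements: with `π_i = Σ_j (∂L/∂P_{ij})(P) · w_j(X)` and
`H_j = Σ_{j'≠j} (Σ_i (∂L/∂P_{ij'})(P) · P_{ij}) · w_{j'}(X)
      + (Σ_i (∂L/∂P_{ij})(P) · P_{ij} − L(P)) · w_j(X)`,
one has `Σ_i π_i · (P·X)_{ik} = Σ_j H_j · X_{jk}` for every `k`. -/
theorem nonparametric_HJ_constraints_vanish
    (n M : ℕ)
    (L : Matrix (Fin M) (Fin (n + 1)) ℝ → ℝ)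
    (hdiff : Differentiable ℝ L)
    (P : Matrix (Fin M) (Fin (n + 1)) ℝ)
    (X : Matrix (Fin (n + 1)) (Fin n) ℝ)
    (π : Fin M → ℝ)
    (hπ : ∀ i, π i = ∑ j : Fin (n + 1),
      fderiv ℝ L P (Matrix.single i j 1) * signedMinor X j)
    (H : Fin (n + 1) → ℝ)
    (hH : ∀ j, H j =
      (∑ j' ∈ Finset.univ.erase j,
        (∑ i : Fin M, fderiv ℝ L P (Matrix.single i j' 1) * P i j)
          * signedMinor X j')
      + ((∑ i : Fin M, fderiv ℝ L P (Matrix.single i j 1) * P i j) - L P)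
          * signedMinor X j)
    (k : Fin n) :
    ∑ i : Fin M, π i * (P * X) i k = ∑ j : Fin (n + 1), H j * X j k := by
  set D : Fin M → Fin (n + 1) → ℝ :=
    fun i j => fderiv ℝ L P (Matrix.single i j 1) with hD
  set w : Fin (n + 1) → ℝ := signedMinor X with hw
  set A : Fin (n + 1) → Fin (n + 1) → ℝ :=
    fun j' j => ∑ i : Fin M, D i j' * P i j with hA
  have hH' : ∀ j, H j = (∑ j' : Fin (n + 1), A j' j * w j') - L P * w j := by
    intro j
    rw [hH, ← Finset.sum_erase_add _ _ (Finset.mem_univ j)]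
    ring
  have hsum0 : ∑ j : Fin (n + 1), w j * X j k = 0 := signedMinor_sum X k
  calc ∑ i : Fin M, π i * (P * X) i k
      = ∑ j : Fin (n + 1), ∑ j' : Fin (n + 1), A j j' * (w j * X j' k) := by
        simp only [hπ, Matrix.mul_apply, Finset.sum_mul_sum]
        rw [Finset.sum_comm]
        refine Finset.sum_congr rfl fun j _ => ?_
        rw [Finset.sum_comm]
        refine Finset.sum_congr rfl fun j' _ => ?_
        rw [hA]
        rw [Finset.sum_mul]
        refine Finset.sum_congr rfl fun i _ => ?_
        ring
    _ = ∑ j : Fin (n + 1), H j * X j k := by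
        simp only [hH', sub_mul, Finset.sum_mul]
        rw [Finset.sum_sub_distrib]
        have : ∑ j : Fin (n + 1), L P * w j * X j k = 0 := by
          simp only [mul_assoc, ← Finset.mul_sum, hsum0, mul_zero]
        rw [this, sub_zero, Finset.sum_comm]
        refine Finset.sum_congr rfl fun j _ => Finset.sum_congr rfl fun j' _ => ?_
        ring
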